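/- Let L be a field of characteristic 0 containing Q_p, and let L[ε] = L[ε]/(ε²) be the dual numbers. Let χ : Z_p^× → L^× be a continuous character and χ̃ : Z_p^× → L[ε]^× a continuous character such that reducing ε to 0 gives back χ. Then there exists t ∈ L such that χ̃(z) = χ(z)(1 + t ε log_p(z)) for all z ∈ Z_p^×, where log_p is the p-adic logarithm (extended to Z_p^× by killing roots of unity). -/

import Mathlib

open DualNumber

/-- Let `L` be a field of characteristic `0` containing `ℚ_p`, and
`L[ε] = L[ε]/(ε²)` the dual numbers.  Let `χ : ℤ_p^× → L^×` be a continuous character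
and `χ̃ : ℤ_p^× → L[ε]^×` a continuous character reducing to `χ` when `ε ↦ 0`.  Then
there is `t ∈ L` with `χ̃(z) = χ(z)(1 + t ε log_p z)` for all `z ∈ ℤ_p^×`, where
`log_p` is the Iwasawa `p`-adic logarithm (additive on products, vanishing exactly on
the roots of unity, continuous). -/
theorem stmt_0 (p : ℕ) [Fact p.Prime]
    (L : Type*) [NormedField L] [CharZero L] [Algebra ℚ_[p] L]
    (halg : Continuous (algebraMap ℚ_[p] L))
    (logp : ℤ_[p]ˣ → ℚ_[p])
    (hlog_add : ∀ u v : ℤ_[p]ˣ, logp (u * v) = logp u + logp v)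
    (hlog_ker : ∀ u : ℤ_[p]ˣ, logp u = 0 ↔ IsOfFinOrder u)
    (hlog_cont : Continuous logp)
    (χ : ℤ_[p]ˣ →* Lˣ) (hχ : Continuous fun z => ((χ z : L)))
    (χt : ℤ_[p]ˣ →* (DualNumber L)ˣ)
    (hχt : Continuous fun z => ((χt z : DualNumber L)))
    (hred : ∀ z : ℤ_[p]ˣ, TrivSqZeroExt.fst ((χt z : DualNumber L)) = (χ z : L)) :
    ∃ t : L, ∀ z : ℤ_[p]ˣ,
      (χt z : DualNumber L) =
        algebraMap L (DualNumber L) (χ z) *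
          (1 + (t * algebraMap ℚ_[p] L (logp z)) • (ε : DualNumber L)) := by
  classical
  haveI hfc : FirstCountableTopology ℤ_[p]ˣ :=
    Units.isEmbedding_embedProduct.firstCountableTopology
  haveI hcs : CompactSpace ℤ_[p]ˣ := by
    haveI : CompactSpace ℤ_[p]ᵐᵒᵖ := MulOpposite.opHomeomorph.compactSpace
    have h : IsClosed (Set.range (Units.embedProduct ℤ_[p])) := by
      have : Set.range (Units.embedProduct ℤ_[p]) =
          {x : ℤ_[p] × ℤ_[p]ᵐᵒᵖ | x.1 * x.2.unop = 1 ∧ x.2.unop * x.1 = 1} := by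
        ext x
        constructor
        · rintro ⟨u, rfl⟩
          exact ⟨u.mul_inv, u.inv_mul⟩
        · rintro ⟨h1, h2⟩
          exact ⟨⟨x.1, x.2.unop, h1, h2⟩, rfl⟩
      rw [this]
      exact (isClosed_eq (by continuity) continuous_const).inter
        (isClosed_eq (by continuity) continuous_const)
    exact (Topology.IsClosedEmbedding.mk Units.isEmbedding_embedProduct h).compactSpace
  -- the additive "derivative" of χt
  set ψ : ℤ_[p]ˣ → L := fun z => TrivSqZeroExt.snd ((χt z : DualNumber L)) * (↑(χ z))⁻¹ with hψdef
  have hψcont : Continuous ψ :=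
    (TrivSqZeroExt.continuous_snd.comp hχt).mul (hχ.inv₀ fun z => (χ z).ne_zero)
  have hψadd : ∀ u v : ℤ_[p]ˣ, ψ (u * v) = ψ u + ψ v := by
    intro u v
    have h1 : ((χt (u * v) : (DualNumber L)ˣ) : DualNumber L)
        = (χt u : DualNumber L) * (χt v : DualNumber L) := by
      rw [map_mul]; rfl
    have h2 : TrivSqZeroExt.snd ((χt (u * v) : DualNumber L))
        = (χ u : L) * TrivSqZeroExt.snd ((χt v : DualNumber L))
          + (χ v : L) * TrivSqZeroExt.snd ((χt u : DualNumber L)) := by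
      rw [h1, TrivSqZeroExt.snd_mul, hred, hred]
      simp [mul_comm]
    have hu : (χ u : L) ≠ 0 := (χ u).ne_zero
    have hv : (χ v : L) ≠ 0 := (χ v).ne_zero
    simp only [hψdef]
    rw [h2]
    push_cast [map_mul]
    field_simp
    ring
  have hψone : ψ 1 = 0 := by
    have := hψadd 1 1
    rw [mul_one] at this
    linear_combination -this
  have hψpow : ∀ (u : ℤ_[p]ˣ) (n : ℕ), ψ (u ^ n) = (n : L) * ψ u := by
    intro u n
    induction n with
    | zero => simpa using hψone
    | succ n ih => rw [pow_succ, hψadd, ih]; push_cast; ring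
  have hψtor : ∀ u : ℤ_[p]ˣ, IsOfFinOrder u → ψ u = 0 := by
    intro u hu
    obtain ⟨n, hn, hun⟩ := isOfFinOrder_iff_pow_eq_one.1 hu
    have := hψpow u n
    rw [hun, hψone] at this
    have hn' : (n : L) ≠ 0 := Nat.cast_ne_zero.2 hn.ne'
    have h0 : (n : L) * ψ u = 0 := by rw [← this]
    exact (mul_eq_zero.1 h0).resolve_left hn'
  have hlog_one : logp 1 = 0 := by
    have := hlog_add 1 1
    rw [mul_one] at this
    linear_combination -this
  have hlog_pow : ∀ (u : ℤ_[p]ˣ) (n : ℕ), logp (u ^ n) = (n : ℚ_[p]) * logp u := by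
    intro u n
    induction n with
    | zero => simpa using hlog_one
    | succ n ih => rw [pow_succ, hlog_add, ih]; push_cast; ring
  have hlog_inv : ∀ u : ℤ_[p]ˣ, logp u⁻¹ = -logp u := by
    intro u
    have := hlog_add u u⁻¹
    rw [mul_inv_cancel, hlog_one] at this
    linear_combination -this
  -- the core limit argument
  have core : ∀ (x : ℕ → ℤ_[p]ˣ) (S : L),
      Filter.Tendsto (fun n => logp (x n)) Filter.atTop (nhds 0) →
      Filter.Tendsto (fun n => ψ (x n)) Filter.atTop (nhds S) → S = 0 := by
    intro x S hl hp
    obtain ⟨x0, -, φ, hφ, hconv⟩ := isCompact_univ.tendsto_subseq (fun n => Set.mem_univ (x n))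
    have h1 : logp x0 = 0 :=
      tendsto_nhds_unique ((hlog_cont.continuousAt.tendsto).comp hconv)
        (hl.comp hφ.tendsto_atTop)
    have h2 : ψ x0 = 0 := hψtor _ ((hlog_ker x0).1 h1)
    have h3 : Filter.Tendsto (fun n => ψ (x (φ n))) Filter.atTop (nhds (ψ x0)) :=
      (hψcont.continuousAt.tendsto).comp hconv
    rw [h2] at h3
    exact tendsto_nhds_unique (hp.comp hφ.tendsto_atTop) h3
  -- main claim: ψ z = t * algebraMap (logp z)
  have main : ∃ t : L, ∀ z : ℤ_[p]ˣ, ψ z = t * algebraMap ℚ_[p] L (logp z) := by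
    by_cases hall : ∀ w : ℤ_[p]ˣ, logp w = 0
    · exact ⟨0, fun z => by
        rw [hψtor z ((hlog_ker z).1 (hall z)), zero_mul]⟩
    push_neg at hall
    obtain ⟨w, hw⟩ := hall
    have hwL : algebraMap ℚ_[p] L (logp w) ≠ 0 := by
      simpa using (map_ne_zero (algebraMap ℚ_[p] L)).2 hw
    refine ⟨ψ w / algebraMap ℚ_[p] L (logp w), fun z => ?_⟩
    -- choose m so that p^m * (logp z / logp w) is integral
    set c : ℚ_[p] := logp z / logp w with hc
    obtain ⟨m, hm⟩ := pow_unbounded_of_one_lt (‖c‖) (by exact_mod_cast (Fact.out : p.Prime).one_lt : (1:ℝ) < p)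
    have hcm : ‖(p : ℚ_[p]) ^ m * c‖ ≤ 1 := by
      rw [norm_mul, Padic.norm_p_pow]
      rcases eq_or_ne c 0 with h | h
      · simp [h]
      · have hp0 : (0:ℝ) < (p:ℝ) ^ m :=
          pow_pos (by exact_mod_cast (Fact.out : p.Prime).pos) m
        rw [zpow_neg, zpow_natCast, inv_mul_le_iff₀ hp0, mul_one]
        exact hm.le
    set c' : ℤ_[p] := ⟨(p : ℚ_[p]) ^ m * c, hcm⟩ with hc'
    have hc'eq : (c' : ℚ_[p]) = (p : ℚ_[p]) ^ m * c := rfl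
    have hkey : (c' : ℚ_[p]) * logp w = (p : ℚ_[p]) ^ m * logp z := by
      rw [hc'eq, hc, mul_assoc, div_mul_cancel₀ _ hw]
    -- approximate c' by naturals
    have hseq : ∀ n : ℕ, ∃ k : ℕ, dist c' ((k : ℤ_[p])) < 1 / (n + 1) := by
      intro n
      exact PadicInt.denseRange_natCast.exists_dist_lt c'
        (show (0:ℝ) < 1 / (n + 1) by positivity)
    choose a ha using hseq
    have haconv : Filter.Tendsto (fun n => ((a n : ℤ_[p]))) Filter.atTop (nhds c') := by
      rw [Metric.tendsto_atTop]
      intro εr hεr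
      obtain ⟨N, hN⟩ := exists_nat_one_div_lt hεr
      refine ⟨N, fun n hn => lt_of_lt_of_le (dist_comm ((a n : ℤ_[p])) c' ▸ ha n) (le_trans ?_ hN.le)⟩
      have : (N:ℝ) + 1 ≤ (n:ℝ) + 1 := by exact_mod_cast Nat.succ_le_succ hn
      exact one_div_le_one_div_of_le (by positivity) this
    have haconvQ : Filter.Tendsto (fun n => ((a n : ℚ_[p]))) Filter.atTop (nhds (c' : ℚ_[p])) := by
      have : Continuous ((↑) : ℤ_[p] → ℚ_[p]) := continuous_subtype_val
      have h := (this.continuousAt.tendsto).comp haconv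
      exact h.congr (fun n => PadicInt.coe_natCast (a n))
    set x : ℕ → ℤ_[p]ˣ := fun n => z ^ (p ^ m) * (w ^ (a n))⁻¹ with hx
    have hlx : ∀ n, logp (x n) = (p : ℚ_[p]) ^ m * logp z - (a n : ℚ_[p]) * logp w := by
      intro n
      rw [hx]
      simp only
      rw [hlog_add, hlog_inv, hlog_pow, hlog_pow]
      push_cast
      ring
    have hpx : ∀ n, ψ (x n) = (p : L) ^ m * ψ z - (a n : L) * ψ w := by
      intro n
      have hinv : ∀ u : ℤ_[p]ˣ, ψ u⁻¹ = -ψ u := by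
        intro u
        have := hψadd u u⁻¹
        rw [mul_inv_cancel, hψone] at this
        linear_combination -this
      rw [hx]
      simp only
      rw [hψadd, hinv, hψpow, hψpow]
      push_cast
      ring
    have hl0 : Filter.Tendsto (fun n => logp (x n)) Filter.atTop (nhds 0) := by
      simp only [hlx]
      have h1 : Filter.Tendsto (fun n => (p : ℚ_[p]) ^ m * logp z - (a n : ℚ_[p]) * logp w)
          Filter.atTop (nhds ((p : ℚ_[p]) ^ m * logp z - (c' : ℚ_[p]) * logp w)) :=
        tendsto_const_nhds.sub (haconvQ.mul tendsto_const_nhds)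
      rwa [hkey, sub_self] at h1
    have hS : Filter.Tendsto (fun n => ψ (x n)) Filter.atTop
        (nhds ((p : L) ^ m * ψ z - algebraMap ℚ_[p] L (c' : ℚ_[p]) * ψ w)) := by
      simp only [hpx]
      have h2 : Filter.Tendsto (fun n => ((a n : L))) Filter.atTop
          (nhds (algebraMap ℚ_[p] L (c' : ℚ_[p]))) := by
        have h3 := (halg.continuousAt.tendsto).comp haconvQ
        have h4 : (fun n => algebraMap ℚ_[p] L ((a n : ℚ_[p]))) = fun n => ((a n : L)) := by
          funext n; rw [map_natCast]
        rwa [← h4]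
      exact tendsto_const_nhds.sub (h2.mul tendsto_const_nhds)
    have hzero := core x _ hl0 hS
    have heq : (p : L) ^ m * ψ z = algebraMap ℚ_[p] L (c' : ℚ_[p]) * ψ w := by
      linear_combination hzero
    -- now unwind
    have hpL : (p : L) ^ m ≠ 0 :=
      pow_ne_zero m (Nat.cast_ne_zero.2 (Fact.out : p.Prime).ne_zero)
    have hmapz : algebraMap ℚ_[p] L (c' : ℚ_[p])
        = (p : L) ^ m * algebraMap ℚ_[p] L (logp z) / algebraMap ℚ_[p] L (logp w) := by
      rw [hc'eq, hc, map_mul, map_div₀, map_pow]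
      have : algebraMap ℚ_[p] L (p : ℚ_[p]) = (p : L) := map_natCast _ p
      rw [this]
      ring
    rw [hmapz] at heq
    field_simp at heq
    have h6 := mul_left_cancel₀ hpL (show (p:L)^m * (ψ z * algebraMap ℚ_[p] L (logp w))
      = (p:L)^m * (algebraMap ℚ_[p] L (logp z) * ψ w) by linear_combination (p:L)^m * heq)
    rw [div_mul_eq_mul_div, eq_div_iff hwL]
    linear_combination h6
  obtain ⟨t, ht⟩ := main
  refine ⟨t, fun z => ?_⟩
  have hsnd : TrivSqZeroExt.snd ((χt z : DualNumber L)) = (χ z : L) * (t * algebraMap ℚ_[p] L (logp z)) := by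
    have := ht z
    simp only [hψdef] at this
    have hz : (χ z : L) ≠ 0 := (χ z).ne_zero
    field_simp at this ⊢
    linear_combination this
  apply TrivSqZeroExt.ext
  · rw [hred z]
    simp only [TrivSqZeroExt.fst_mul, TrivSqZeroExt.fst_add, TrivSqZeroExt.fst_one,
      TrivSqZeroExt.fst_smul, DualNumber.fst_eps, TrivSqZeroExt.algebraMap_eq_inl,
      TrivSqZeroExt.fst_inl, smul_zero, add_zero, mul_one]
  · rw [hsnd]
    simp only [TrivSqZeroExt.snd_mul, TrivSqZeroExt.snd_add, TrivSqZeroExt.snd_one,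
      TrivSqZeroExt.snd_smul, DualNumber.snd_eps, TrivSqZeroExt.fst_add, TrivSqZeroExt.fst_one,
      TrivSqZeroExt.fst_smul, DualNumber.fst_eps, TrivSqZeroExt.algebraMap_eq_inl,
      TrivSqZeroExt.fst_inl, TrivSqZeroExt.snd_inl, smul_eq_mul, smul_zero, zero_add, add_zero,
      mul_one, zero_mul, mul_zero, MulOpposite.op_smul, MulOpposite.op_one]
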